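/- Let (a_i, b_i, c_i, α_i, β_i) for i ∈ {L, C, R} be real numbers with a_i² + b_i·c_i ≠ 0 for each i, and for i ∈ {L, C, R} let H_i(x,y) = (b_i/2)y² − (c_i/2)x² + a_i x y + α_i y − β_i x. Let S = {(y0, y1, y2, y3) ∈ ℝ⁴ : y1 < y0, y2 < y3, H_R(1, y1) = H_R(1, y0), H_C(1, y0) = H_C(−1, y3), H_L(−1, y3) = H_L(−1, y2), and H_C(−1, y2) = H_C(1, y1)}. If S is finite, then S has at most one element. (This is the algebraic core of the statement that a discontinuous planar piecewise linear Hamiltonian system with three zones separated by two parallel straight lines, whose defining linear systems have isolated singular points, has at most one limit cycle.) -/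

import Mathlib

open Real Set Filter Topology

private lemma aux_ev (e c : ℝ) (he : 0 ≤ e) (h : e ≠ 0 ∨ 0 ≤ c) :
    ∀ᶠ t in 𝓝[>] (0:ℝ), 0 ≤ e + 2*t*c + t^2 := by
  rcases h with h | h
  · have hpos : 0 < e := lt_of_le_of_ne he (Ne.symm h)
    have hc : Continuous fun t : ℝ => e + 2*t*c + t^2 := by continuity
    have h0 : (0:ℝ) < e + 2*(0:ℝ)*c + (0:ℝ)^2 := by simpa using hpos
    have hev : ∀ᶠ t in 𝓝 (0:ℝ), 0 < e + 2*t*c + t^2 :=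
      (hc.continuousAt (x := 0)).eventually_const_lt h0
    exact (hev.filter_mono nhdsWithin_le_nhds).mono fun t ht => le_of_lt ht
  · filter_upwards [self_mem_nhdsWithin] with t ht
    have ht' : (0:ℝ) < t := ht
    nlinarith [mul_nonneg (le_of_lt ht') h, sq_nonneg t]

private lemma core (k x y z w : ℝ) (h1 : x^2 - z^2 = k) (h2 : y^2 - w^2 = k)
    (hyx : y < x) (hwz : w < z) :
    {s : ℝ × ℝ × ℝ × ℝ | s.1^2 - s.2.2.1^2 = k ∧ s.2.1^2 - s.2.2.2^2 = k ∧
      s.2.1 < s.1 ∧ s.2.2.2 < s.2.2.1 ∧ s.2.2.1 + s.2.2.2 = z + w}.Infinite := by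
  classical
  have hzk : z^2 + k = x^2 := by linarith
  have hwk : w^2 + k = y^2 := by linarith
  obtain ⟨d, hd, hda, hdb⟩ :
      ∃ d : ℝ, (d = 1 ∨ d = -1) ∧ (x ≠ 0 ∨ 0 ≤ d*z) ∧ (y ≠ 0 ∨ 0 ≤ -(d*w)) := by
    by_cases hy : y = 0
    · have hx : 0 < x := hy ▸ hyx
      by_cases hw : 0 ≤ w
      · exact ⟨-1, Or.inr rfl, Or.inl (ne_of_gt hx), Or.inr (by nlinarith)⟩
      · exact ⟨1, Or.inl rfl, Or.inl (ne_of_gt hx), Or.inr (by nlinarith [lt_of_not_ge hw])⟩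
    · by_cases hz : 0 ≤ z
      · exact ⟨1, Or.inl rfl, Or.inr (by nlinarith), Or.inl hy⟩
      · exact ⟨-1, Or.inr rfl, Or.inr (by nlinarith [lt_of_not_ge hz]), Or.inl hy⟩
  have hd2 : d^2 = 1 := by rcases hd with h | h <;> rw [h] <;> norm_num
  have hdne : d ≠ 0 := by rcases hd with h | h <;> rw [h] <;> norm_num
  obtain ⟨sx, hsx2, hsxval⟩ : ∃ s : ℝ, s^2 = 1 ∧ s * |x| = x := by
    by_cases h : 0 ≤ x
    · exact ⟨1, by norm_num, by rw [abs_of_nonneg h, one_mul]⟩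
    · exact ⟨-1, by norm_num, by rw [abs_of_neg (lt_of_not_ge h)]; ring⟩
  obtain ⟨sy, hsy2, hsyval⟩ : ∃ s : ℝ, s^2 = 1 ∧ s * |y| = y := by
    by_cases h : 0 ≤ y
    · exact ⟨1, by norm_num, by rw [abs_of_nonneg h, one_mul]⟩
    · exact ⟨-1, by norm_num, by rw [abs_of_neg (lt_of_not_ge h)]; ring⟩
  have ev_a : ∀ᶠ t in 𝓝[>] (0:ℝ), 0 ≤ (z + t*d)^2 + k := by
    have key : ∀ᶠ t in 𝓝[>] (0:ℝ), 0 ≤ (z^2 + k) + 2*t*(d*z) + t^2 := by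
      apply aux_ev
      · rw [hzk]; positivity
      · rcases hda with h | h
        · left; rw [hzk]; positivity
        · right; exact h
    filter_upwards [key] with t ht
    nlinarith [ht, hd2, sq_nonneg t]
  have ev_b : ∀ᶠ t in 𝓝[>] (0:ℝ), 0 ≤ (w - t*d)^2 + k := by
    have key : ∀ᶠ t in 𝓝[>] (0:ℝ), 0 ≤ (w^2 + k) + 2*t*(-(d*w)) + t^2 := by
      apply aux_ev
      · rw [hwk]; positivity
      · rcases hdb with h | h
        · left; rw [hwk]; positivity
        · right; exact h
    filter_upwards [key] with t ht
    nlinarith [ht, hd2, sq_nonneg t]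
  have hF0x : sx * Real.sqrt ((z + 0*d)^2 + k) = x := by
    have h : (z + 0*d)^2 + k = x^2 := by rw [zero_mul, add_zero]; exact hzk
    rw [h, Real.sqrt_sq_eq_abs]; exact hsxval
  have hF0y : sy * Real.sqrt ((w - 0*d)^2 + k) = y := by
    have h : (w - 0*d)^2 + k = y^2 := by rw [zero_mul, sub_zero]; exact hwk
    rw [h, Real.sqrt_sq_eq_abs]; exact hsyval
  have hpoly1 : Continuous fun t : ℝ => (z + t*d)^2 + k := by
    apply Continuous.add _ continuous_const
    exact (continuous_const.add (continuous_id.mul continuous_const)).pow 2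
  have hpoly2 : Continuous fun t : ℝ => (w - t*d)^2 + k := by
    apply Continuous.add _ continuous_const
    exact (continuous_const.sub (continuous_id.mul continuous_const)).pow 2
  have hc1 : Continuous fun t : ℝ => sx * Real.sqrt ((z + t*d)^2 + k) :=
    continuous_const.mul (Real.continuous_sqrt.comp hpoly1)
  have hc2 : Continuous fun t : ℝ => sy * Real.sqrt ((w - t*d)^2 + k) :=
    continuous_const.mul (Real.continuous_sqrt.comp hpoly2)
  have ev_c : ∀ᶠ t in 𝓝[>] (0:ℝ),
      sy * Real.sqrt ((w - t*d)^2 + k) < sx * Real.sqrt ((z + t*d)^2 + k) := by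
    have h0 : sy * Real.sqrt ((w - 0*d)^2 + k) < sx * Real.sqrt ((z + 0*d)^2 + k) := by
      rw [hF0x, hF0y]; exact hyx
    exact ((hc2.continuousAt (x := 0)).eventually_lt (hc1.continuousAt (x := 0)) h0).filter_mono
      nhdsWithin_le_nhds
  have ev_d : ∀ᶠ t in 𝓝[>] (0:ℝ), w - t*d < z + t*d := by
    have hc1' : Continuous fun t : ℝ => w - t*d :=
      continuous_const.sub (continuous_id.mul continuous_const)
    have hc2' : Continuous fun t : ℝ => z + t*d :=
      continuous_const.add (continuous_id.mul continuous_const)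
    have h0 : w - 0*d < z + 0*d := by simpa using hwz
    exact ((hc1'.continuousAt (x := 0)).eventually_lt (hc2'.continuousAt (x := 0)) h0).filter_mono
      nhdsWithin_le_nhds
  have hT : {t : ℝ | 0 ≤ (z + t*d)^2 + k ∧ 0 ≤ (w - t*d)^2 + k ∧
      sy * Real.sqrt ((w - t*d)^2 + k) < sx * Real.sqrt ((z + t*d)^2 + k) ∧
      w - t*d < z + t*d} ∈ 𝓝[>] (0:ℝ) := by
    filter_upwards [ev_a, ev_b, ev_c, ev_d] with t h1' h2' h3' h4'
    exact ⟨h1', h2', h3', h4'⟩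
  obtain ⟨ε, hε, hsub⟩ := mem_nhdsGT_iff_exists_Ioo_subset.mp hT
  have hIoo : (Ioo (0:ℝ) ε).Infinite := Set.Ioo_infinite hε
  have hinj : Set.InjOn (fun t : ℝ =>
      ((sx * Real.sqrt ((z + t*d)^2 + k), sy * Real.sqrt ((w - t*d)^2 + k), z + t*d, w - t*d)
        : ℝ × ℝ × ℝ × ℝ)) (Ioo (0:ℝ) ε) := by
    intro a _ b _ hab
    have h3 : z + a*d = z + b*d := congrArg (fun s : ℝ × ℝ × ℝ × ℝ => s.2.2.1) hab
    have : a * d = b * d := by linarith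
    exact mul_right_cancel₀ hdne this
  refine (hIoo.image hinj).mono ?_
  rintro _ ⟨t, ht, rfl⟩
  obtain ⟨ha, hb, hc', hd'⟩ := hsub ht
  simp only [Set.mem_setOf_eq]
  refine ⟨?_, ?_, hc', hd', by ring⟩
  · rw [mul_pow, hsx2, one_mul, Real.sq_sqrt ha]; ring
  · rw [mul_pow, hsy2, one_mul, Real.sq_sqrt hb]; ring

private lemma deg1 (σR σL k x z : ℝ) (hσL : σL ≠ 0) (hsq : σR^2 = σL^2)
    (hz : 2*σL*z = 2*σR*x) (hk : x^2 - z^2 = k)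
    (hyx : σR - x < x) (hwz : σL - z < z) :
    {s : ℝ × ℝ × ℝ × ℝ | s.1^2 - s.2.2.1^2 = k ∧ s.2.1^2 - s.2.2.2^2 = k ∧
      s.2.1 < s.1 ∧ s.2.2.2 < s.2.2.1 ∧ s.1 + s.2.1 = σR ∧ s.2.2.1 + s.2.2.2 = σL}.Infinite := by
  set e : ℝ := σR / σL with he_def
  have heσ : e * σL = σR := div_mul_cancel₀ _ hσL
  have he2 : e^2 = 1 := by
    rw [he_def, div_pow, hsq, div_self (pow_ne_zero _ hσL)]
  have he1 : e = 1 ∨ e = -1 := by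
    have h : (e - 1) * (e + 1) = 0 := by linear_combination he2
    rcases mul_eq_zero.mp h with h | h
    · left; linarith
    · right; linarith
  have hzx : z = e * x := by
    have h2 : σL * z = σL * (e * x) := by
      have h3 : σL * (e * x) = σR * x := by rw [← heσ]; ring
      rw [h3]; linarith
    exact mul_left_cancel₀ hσL h2
  have hk0 : k = 0 := by
    rw [← hk, hzx]; nlinarith [he2]
  have hε : (0:ℝ) < z - σL/2 := by linarith
  have hIoo : (Ioo (0:ℝ) (z - σL/2)).Infinite := Set.Ioo_infinite hε
  have hinj : Set.InjOn (fun t : ℝ =>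
      ((x + t, σR - (x + t), e * (x + t), σL - e * (x + t)) : ℝ × ℝ × ℝ × ℝ))
      (Ioo (0:ℝ) (z - σL/2)) := by
    intro a _ b _ hab
    have h : x + a = x + b := congrArg (fun s : ℝ × ℝ × ℝ × ℝ => s.1) hab
    linarith
  refine (hIoo.image hinj).mono ?_
  rintro _ ⟨t, ht, rfl⟩
  obtain ⟨ht0, htε⟩ := ht
  simp only [Set.mem_setOf_eq]
  refine ⟨?_, ?_, by linarith, ?_, by ring, by ring⟩
  · linear_combination (-(x+t)^2) * he2 - hk0
  · linear_combination hsq + (2*(x+t))*heσ - (x+t)^2*he2 - hk0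
  · have hkey : σL < 2*(e*(x+t)) := by
      rcases he1 with h | h
      · rw [h] at hzx ⊢; simp only [one_mul] at hzx ⊢; linarith
      · rw [h] at hzx ⊢; linarith [hzx]
    linarith

private lemma deg2 (k x z : ℝ) (hk : x^2 - z^2 = k) (hx : 0 < x) (hz : 0 < z) :
    {s : ℝ × ℝ × ℝ × ℝ | s.1^2 - s.2.2.1^2 = k ∧ s.2.1^2 - s.2.2.2^2 = k ∧
      s.2.1 < s.1 ∧ s.2.2.2 < s.2.2.1 ∧ s.1 + s.2.1 = 0 ∧ s.2.2.1 + s.2.2.2 = 0}.Infinite := by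
  have hIoi : (Ioi (0:ℝ)).Infinite := Set.Ioi_infinite 0
  have hinj : Set.InjOn (fun t : ℝ =>
      ((x * Real.cosh t + z * Real.sinh t, -(x * Real.cosh t + z * Real.sinh t),
        x * Real.sinh t + z * Real.cosh t, -(x * Real.sinh t + z * Real.cosh t))
        : ℝ × ℝ × ℝ × ℝ)) (Ioi (0:ℝ)) := by
    intro a _ b _ hab
    have h1 : x * Real.cosh a + z * Real.sinh a = x * Real.cosh b + z * Real.sinh b :=
      congrArg (fun s : ℝ × ℝ × ℝ × ℝ => s.1) hab
    have h2 : x * Real.sinh a + z * Real.cosh a = x * Real.sinh b + z * Real.cosh b :=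
      congrArg (fun s : ℝ × ℝ × ℝ × ℝ => s.2.2.1) hab
    have hsum : (x + z) * Real.exp a = (x + z) * Real.exp b := by
      rw [← Real.cosh_add_sinh, ← Real.cosh_add_sinh]; ring_nf; nlinarith [h1, h2]
    have := mul_left_cancel₀ (by positivity : x + z ≠ 0) hsum
    exact Real.exp_eq_exp.mp this
  refine (hIoi.image hinj).mono ?_
  rintro _ ⟨t, ht, rfl⟩
  have ht0 : (0:ℝ) ≤ t := le_of_lt ht
  have hch : 0 < Real.cosh t := Real.cosh_pos t
  have hsh : 0 ≤ Real.sinh t := by positivity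
  have hX : 0 < x * Real.cosh t + z * Real.sinh t := by positivity
  have hZ : 0 < x * Real.sinh t + z * Real.cosh t := by positivity
  simp only [Set.mem_setOf_eq]
  have hcs : Real.cosh t ^ 2 = Real.sinh t ^ 2 + 1 := Real.cosh_sq t
  refine ⟨?_, ?_, by linarith, by linarith, by ring, by ring⟩
  · linear_combination (x^2 - z^2) * hcs + hk
  · linear_combination (x^2 - z^2) * hcs + hk

private lemma samesign (A B e d : ℝ) (he : 0 < e) (hd : 0 < d) (hrel : A*e = B*d)
    (hAB : ¬ (A = 0 ∧ B = 0)) : 0 < A*B := by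
  rcases lt_trichotomy A 0 with hA | hA | hA
  · have h1 : B*d < 0 := by rw [← hrel]; exact mul_neg_of_neg_of_pos hA he
    have hB : B < 0 := by nlinarith
    exact mul_pos_of_neg_of_neg hA hB
  · exfalso
    apply hAB
    refine ⟨hA, ?_⟩
    rw [hA, zero_mul] at hrel
    rcases mul_eq_zero.mp hrel.symm with h | h
    · exact h
    · exfalso; linarith
  · have h1 : 0 < B*d := by rw [← hrel]; exact mul_pos hA he
    have hB : 0 < B := by nlinarith
    exact mul_pos hA hB

set_option maxHeartbeats 2000000 in
/-- Algebraic core of: a discontinuous planar piecewise linear Hamiltonian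
system with three zones separated by two parallel straight lines, whose
defining linear systems have isolated singular points, has at most one limit
cycle. If the set of tuples `(y0, y1, y2, y3)` with `y1 < y0`, `y2 < y3`
solving the four closing equations is finite, then it has at most one
element. -/
theorem stmt_6 (aL bL cL αL βL aC bC cC αC βC aR bR cR αR βR : ℝ)
    (hL : aL ^ 2 + bL * cL ≠ 0) (hC : aC ^ 2 + bC * cC ≠ 0)
    (hR : aR ^ 2 + bR * cR ≠ 0)
    (HL HC HR : ℝ → ℝ → ℝ)
    (hHL : ∀ x y : ℝ,
      HL x y = bL / 2 * y ^ 2 - cL / 2 * x ^ 2 + aL * x * y + αL * y - βL * x)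
    (hHC : ∀ x y : ℝ,
      HC x y = bC / 2 * y ^ 2 - cC / 2 * x ^ 2 + aC * x * y + αC * y - βC * x)
    (hHR : ∀ x y : ℝ,
      HR x y = bR / 2 * y ^ 2 - cR / 2 * x ^ 2 + aR * x * y + αR * y - βR * x)
    (S : Set (ℝ × ℝ × ℝ × ℝ))
    (hS : S = {p : ℝ × ℝ × ℝ × ℝ | p.2.1 < p.1 ∧ p.2.2.1 < p.2.2.2 ∧
      HR 1 p.2.1 = HR 1 p.1 ∧
      HC 1 p.1 = HC (-1) p.2.2.2 ∧
      HL (-1) p.2.2.2 = HL (-1) p.2.2.1 ∧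
      HC (-1) p.2.2.1 = HC 1 p.2.1})
    (hfin : S.Finite) :
    S.Subsingleton := by
  intro p hp q hq
  obtain ⟨p0, p1, p2, p3⟩ := p
  obtain ⟨q0, q1, q2, q3⟩ := q
  rw [hS] at hp hq
  simp only [Set.mem_setOf_eq] at hp hq
  obtain ⟨hp01, hp23, hpe1, hpe2, hpe3, hpe4⟩ := hp
  obtain ⟨hq01, hq23, hqe1, hqe2, hqe3, hqe4⟩ := hq
  rw [hHR 1 p1, hHR 1 p0] at hpe1
  rw [hHC 1 p0, hHC (-1) p3] at hpe2
  rw [hHL (-1) p3, hHL (-1) p2] at hpe3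
  rw [hHC (-1) p2, hHC 1 p1] at hpe4
  rw [hHR 1 q1, hHR 1 q0] at hqe1
  rw [hHC 1 q0, hHC (-1) q3] at hqe2
  rw [hHL (-1) q3, hHL (-1) q2] at hqe3
  rw [hHC (-1) q2, hHC 1 q1] at hqe4
  -- factored versions of the outer-zone equations
  have hfacRp : bR/2*(p0+p1) + (aR+αR) = 0 := by
    have hfac : (p1-p0)*(bR/2*(p0+p1) + (aR+αR)) = 0 := by linear_combination hpe1
    rcases mul_eq_zero.mp hfac with h' | h'
    · exfalso; linarith
    · exact h'
  have hfacRq : bR/2*(q0+q1) + (aR+αR) = 0 := by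
    have hfac : (q1-q0)*(bR/2*(q0+q1) + (aR+αR)) = 0 := by linear_combination hqe1
    rcases mul_eq_zero.mp hfac with h' | h'
    · exfalso; linarith
    · exact h'
  have hfacLp : bL/2*(p2+p3) + (αL-aL) = 0 := by
    have hfac : (p3-p2)*(bL/2*(p2+p3) + (αL-aL)) = 0 := by linear_combination hpe3
    rcases mul_eq_zero.mp hfac with h' | h'
    · exfalso; linarith
    · exact h'
  have hfacLq : bL/2*(q2+q3) + (αL-aL) = 0 := by
    have hfac : (q3-q2)*(bL/2*(q2+q3) + (αL-aL)) = 0 := by linear_combination hqe3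
    rcases mul_eq_zero.mp hfac with h' | h'
    · exfalso; linarith
    · exact h'
  rcases eq_or_ne bC 0 with hb0 | hb0
  · -- bC = 0 : the central equations are linear and S contains a ray, contradiction
    exfalso
    subst hb0
    have haC : aC ≠ 0 := by
      intro h; apply hC; rw [h]; ring
    have hp2' : (aC+αC)*p0 - (αC-aC)*p3 - 2*βC = 0 := by linear_combination hpe2
    have hp4' : (αC-aC)*p2 - (aC+αC)*p1 + 2*βC = 0 := by linear_combination hpe4
    have hABrel : (aC+αC)*(p0-p1) = (αC-aC)*(p3-p2) := by
      linear_combination hp2' + hp4'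
    have hAB : 0 < (aC+αC)*(αC-aC) := by
      apply samesign _ _ (p0-p1) (p3-p2) (by linarith) (by linarith) hABrel
      rintro ⟨hA, hB⟩
      exact haC (by linarith)
    have hBne : αC - aC ≠ 0 := by
      intro h; rw [h] at hAB; simp at hAB
    -- the ray of solutions
    have hsubS : (fun t : ℝ => ((p0 + t, p1 - t,
        ((aC+αC)*(p1-t) - 2*βC)/(αC-aC), ((aC+αC)*(p0+t) - 2*βC)/(αC-aC)) : ℝ×ℝ×ℝ×ℝ)) ''
        (Ioi (0:ℝ)) ⊆ S := by
      rintro _ ⟨t, ht, rfl⟩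
      have ht0 : (0:ℝ) < t := ht
      rw [hS]
      simp only [Set.mem_setOf_eq]
      have hsum23 : ((aC+αC)*(p1-t) - 2*βC)/(αC-aC) + ((aC+αC)*(p0+t) - 2*βC)/(αC-aC)
          = p2 + p3 := by
        field_simp
        linear_combination hp2' - hp4'
      refine ⟨by linarith, ?_, ?_, ?_, ?_, ?_⟩
      · -- u2 < u3
        have heq : ((aC+αC)*(p0+t) - 2*βC)/(αC-aC) - ((aC+αC)*(p1-t) - 2*βC)/(αC-aC)
            = ((aC+αC)*(p0-p1+2*t))/(αC-aC) := by field_simp; ring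
        have hposq : 0 < ((aC+αC)*(p0-p1+2*t))/(αC-aC) := by
          rcases mul_pos_iff.mp hAB with ⟨hA', hB'⟩ | ⟨hA', hB'⟩
          · exact div_pos (mul_pos hA' (by linarith)) hB'
          · exact div_pos_of_neg_of_neg (mul_neg_of_neg_of_pos hA' (by linarith)) hB'
        linarith [heq, hposq]
      · rw [hHR 1 (p1 - t), hHR 1 (p0 + t)]
        linear_combination ((p1-t)-(p0+t)) * hfacRp
      · rw [hHC 1 (p0 + t), hHC (-1) (((aC+αC)*(p0+t) - 2*βC)/(αC-aC))]
        field_simp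
        ring
      · rw [hHL (-1) (((aC+αC)*(p0+t) - 2*βC)/(αC-aC)),
            hHL (-1) (((aC+αC)*(p1-t) - 2*βC)/(αC-aC))]
        have hfac' : bL/2*((((aC+αC)*(p1-t) - 2*βC)/(αC-aC)) +
            (((aC+αC)*(p0+t) - 2*βC)/(αC-aC))) + (αL-aL) = 0 := by
          rw [hsum23]; exact hfacLp
        linear_combination ((((aC+αC)*(p0+t) - 2*βC)/(αC-aC)) -
            (((aC+αC)*(p1-t) - 2*βC)/(αC-aC))) * hfac'
      · rw [hHC (-1) (((aC+αC)*(p1-t) - 2*βC)/(αC-aC)), hHC 1 (p1 - t)]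
        field_simp
        ring
    have hinj : Set.InjOn (fun t : ℝ => ((p0 + t, p1 - t,
        ((aC+αC)*(p1-t) - 2*βC)/(αC-aC), ((aC+αC)*(p0+t) - 2*βC)/(αC-aC)) : ℝ×ℝ×ℝ×ℝ))
        (Ioi (0:ℝ)) := by
      intro a _ b _ hab
      have h : p0 + a = p0 + b := congrArg (fun s : ℝ × ℝ × ℝ × ℝ => s.1) hab
      linarith
    exact hfin.not_infinite (((Set.Ioi_infinite 0).image hinj).mono hsubS)
  · -- bC ≠ 0 : pass to shifted (hyperbola) coordinates
    have hXZp : (p0 + (aC+αC)/bC)^2 - (p3 + (αC-aC)/bC)^2 = 4*βC/bC + 4*aC*αC/bC^2 := by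
      field_simp
      linear_combination (2*bC) * hpe2
    have hYWp : (p1 + (aC+αC)/bC)^2 - (p2 + (αC-aC)/bC)^2 = 4*βC/bC + 4*aC*αC/bC^2 := by
      field_simp
      linear_combination (-2*bC) * hpe4
    have hXZq : (q0 + (aC+αC)/bC)^2 - (q3 + (αC-aC)/bC)^2 = 4*βC/bC + 4*aC*αC/bC^2 := by
      field_simp
      linear_combination (2*bC) * hqe2
    have hYWq : (q1 + (aC+αC)/bC)^2 - (q2 + (αC-aC)/bC)^2 = 4*βC/bC + 4*aC*αC/bC^2 := by
      field_simp
      linear_combination (-2*bC) * hqe4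
    have hYXp : p1 + (aC+αC)/bC < p0 + (aC+αC)/bC := by linarith
    have hWZp : p2 + (αC-aC)/bC < p3 + (αC-aC)/bC := by linarith
    have hYXq : q1 + (aC+αC)/bC < q0 + (aC+αC)/bC := by linarith
    have hWZq : q2 + (αC-aC)/bC < q3 + (αC-aC)/bC := by linarith
    -- membership builder in shifted coordinates
    have memS : ∀ X Y Z W : ℝ,
        X^2 - Z^2 = 4*βC/bC + 4*aC*αC/bC^2 →
        Y^2 - W^2 = 4*βC/bC + 4*aC*αC/bC^2 →
        Y < X → W < Z →
        (X + Y = (p0+p1) + 2*((aC+αC)/bC) ∨ (bR = 0 ∧ aR + αR = 0)) →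
        (Z + W = (p2+p3) + 2*((αC-aC)/bC) ∨ (bL = 0 ∧ αL - aL = 0)) →
        ((X - (aC+αC)/bC, Y - (aC+αC)/bC, W - (αC-aC)/bC, Z - (αC-aC)/bC) : ℝ×ℝ×ℝ×ℝ) ∈ S := by
      intro X Y Z W hXZ hYW hyx hwz hE1 hE3
      rw [hS]
      simp only [Set.mem_setOf_eq]
      refine ⟨by linarith, by linarith, ?_, ?_, ?_, ?_⟩
      · rw [hHR 1 (Y - (aC+αC)/bC), hHR 1 (X - (aC+αC)/bC)]
        rcases hE1 with h | ⟨h1, h2⟩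
        · linear_combination ((Y - (aC+αC)/bC) - (X - (aC+αC)/bC)) * hfacRp
            + (bR/2)*((Y - (aC+αC)/bC) - (X - (aC+αC)/bC)) * h
        · linear_combination (((Y - (aC+αC)/bC))^2 - ((X - (aC+αC)/bC))^2)/2 * h1
            + ((Y - (aC+αC)/bC) - (X - (aC+αC)/bC)) * h2
      · rw [hHC 1 (X - (aC+αC)/bC), hHC (-1) (Z - (αC-aC)/bC)]
        field_simp at hXZ ⊢
        linear_combination (1) * hXZ
      · rw [hHL (-1) (Z - (αC-aC)/bC), hHL (-1) (W - (αC-aC)/bC)]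
        rcases hE3 with h | ⟨h1, h2⟩
        · linear_combination ((Z - (αC-aC)/bC) - (W - (αC-aC)/bC)) * hfacLp
            + (bL/2)*((Z - (αC-aC)/bC) - (W - (αC-aC)/bC)) * h
        · linear_combination (((Z - (αC-aC)/bC))^2 - ((W - (αC-aC)/bC))^2)/2 * h1
            + ((Z - (αC-aC)/bC) - (W - (αC-aC)/bC)) * h2
      · rw [hHC (-1) (W - (αC-aC)/bC), hHC 1 (Y - (aC+αC)/bC)]
        field_simp at hYW ⊢
        linear_combination (-1) * hYW
    -- the (injective) un-shifting map
    have ginj : Function.Injective (fun s : ℝ×ℝ×ℝ×ℝ =>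
        ((s.1 - (aC+αC)/bC, s.2.1 - (aC+αC)/bC, s.2.2.2 - (αC-aC)/bC,
          s.2.2.1 - (αC-aC)/bC) : ℝ×ℝ×ℝ×ℝ)) := by
      intro a b h
      obtain ⟨a1, a2, a3, a4⟩ := a
      obtain ⟨b1, b2, b3, b4⟩ := b
      simp only [Prod.mk.injEq] at h ⊢
      obtain ⟨h1, h2, h3, h4⟩ := h
      exact ⟨by linarith, by linarith, by linarith, by linarith⟩
    rcases eq_or_ne bR 0 with hbR | hbR
    · -- right equation is trivial : a one-parameter family exists
      exfalso
      have haR : aR + αR = 0 := by linear_combination hfacRp - ((p0+p1)/2) * hbR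
      have hinf := core (4*βC/bC + 4*aC*αC/bC^2) (p0 + (aC+αC)/bC) (p1 + (aC+αC)/bC)
          (p3 + (αC-aC)/bC) (p2 + (αC-aC)/bC) hXZp hYWp hYXp hWZp
      apply hfin.not_infinite
      refine (hinf.image ginj.injOn).mono ?_
      rintro _ ⟨s, hs, rfl⟩
      obtain ⟨h1, h2, h3, h4, h5⟩ := hs
      exact memS s.1 s.2.1 s.2.2.1 s.2.2.2 h1 h2 h3 h4 (Or.inr ⟨hbR, haR⟩)
        (Or.inl (by linarith [h5]))
    · rcases eq_or_ne bL 0 with hbL | hbL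
      · -- left equation is trivial : a one-parameter family exists
        exfalso
        have haL : αL - aL = 0 := by linear_combination hfacLp - ((p2+p3)/2) * hbL
        have hinf := core (-(4*βC/bC + 4*aC*αC/bC^2)) (p3 + (αC-aC)/bC) (p2 + (αC-aC)/bC)
            (p0 + (aC+αC)/bC) (p1 + (aC+αC)/bC)
            (by linear_combination -hXZp) (by linear_combination -hYWp) hWZp hYXp
        apply hfin.not_infinite
        have ginj2 : Function.Injective (fun s : ℝ×ℝ×ℝ×ℝ =>
            ((s.2.2.1 - (aC+αC)/bC, s.2.2.2 - (aC+αC)/bC, s.2.1 - (αC-aC)/bC,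
              s.1 - (αC-aC)/bC) : ℝ×ℝ×ℝ×ℝ)) := by
          intro a b h
          obtain ⟨a1, a2, a3, a4⟩ := a
          obtain ⟨b1, b2, b3, b4⟩ := b
          simp only [Prod.mk.injEq] at h ⊢
          obtain ⟨h1, h2, h3, h4⟩ := h
          exact ⟨by linarith, by linarith, by linarith, by linarith⟩
        refine (hinf.image ginj2.injOn).mono ?_
        rintro _ ⟨s, hs, rfl⟩
        obtain ⟨h1, h2, h3, h4, h5⟩ := hs
        exact memS s.2.2.1 s.2.2.2 s.1 s.2.1 (by linear_combination -h1)
          (by linear_combination -h2) h4 h3 (Or.inl (by linarith [h5])) (Or.inr ⟨hbL, haL⟩)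
      · -- both outer coefficients nonzero : the sums are fixed
        have hsumR : q0 + q1 = p0 + p1 := by
          have hdiff : bR/2*((q0+q1) - (p0+p1)) = 0 := by
            linear_combination hfacRq - hfacRp
          rcases mul_eq_zero.mp hdiff with h | h
          · exfalso; exact hbR (by linarith [h])
          · linarith
        have hsumL : q2 + q3 = p2 + p3 := by
          have hdiff : bL/2*((q2+q3) - (p2+p3)) = 0 := by
            linear_combination hfacLq - hfacLp
          rcases mul_eq_zero.mp hdiff with h | h
          · exfalso; exact hbL (by linarith [h])
          · linarith
        obtain ⟨σR, hσR⟩ : ∃ s : ℝ, s = (p0+p1) + 2*((aC+αC)/bC) := ⟨_, rfl⟩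
        obtain ⟨σL, hσL⟩ : ∃ s : ℝ, s = (p2+p3) + 2*((αC-aC)/bC) := ⟨_, rfl⟩
        have hXYp : (p0 + (aC+αC)/bC) + (p1 + (aC+αC)/bC) = σR := by rw [hσR]; ring
        have hXYq : (q0 + (aC+αC)/bC) + (q1 + (aC+αC)/bC) = σR := by
          rw [hσR]; linarith [hsumR]
        have hZWp : (p3 + (αC-aC)/bC) + (p2 + (αC-aC)/bC) = σL := by rw [hσL]; ring
        have hZWq : (q3 + (αC-aC)/bC) + (q2 + (αC-aC)/bC) = σL := by
          rw [hσL]; linarith [hsumL]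
        have hlinep : 2*σL*(p3 + (αC-aC)/bC)
            = 2*σR*(p0 + (aC+αC)/bC) - σR^2 + σL^2 := by
          linear_combination (-1)*hXZp + hYWp
            + ((p0 + (aC+αC)/bC) - (p1 + (aC+αC)/bC) - σR) * hXYp
            + ((p2 + (αC-aC)/bC) - (p3 + (αC-aC)/bC) + σL) * hZWp
        have hlineq : 2*σL*(q3 + (αC-aC)/bC)
            = 2*σR*(q0 + (aC+αC)/bC) - σR^2 + σL^2 := by
          linear_combination (-1)*hXZq + hYWq
            + ((q0 + (aC+αC)/bC) - (q1 + (aC+αC)/bC) - σR) * hXYq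
            + ((q2 + (αC-aC)/bC) - (q3 + (αC-aC)/bC) + σL) * hZWq
        rcases eq_or_ne σL 0 with hσL0 | hσL0
        · rcases eq_or_ne σR 0 with hσR0 | hσR0
          · -- both sums vanish : hyperbolic rotations give a family
            exfalso
            have hXpos : 0 < p0 + (aC+αC)/bC := by
              have := hXYp; rw [hσR0] at this; linarith
            have hZpos : 0 < p3 + (αC-aC)/bC := by
              have := hZWp; rw [hσL0] at this; linarith
            have hinf := deg2 _ _ _ hXZp hXpos hZpos
            apply hfin.not_infinite
            refine (hinf.image ginj.injOn).mono ?_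
            rintro _ ⟨s, hs, rfl⟩
            obtain ⟨h1, h2, h3, h4, h5, h6⟩ := hs
            refine memS s.1 s.2.1 s.2.2.1 s.2.2.2 h1 h2 h3 h4 (Or.inl ?_) (Or.inl ?_)
            · have h7 : σR = (p0+p1) + 2*((aC+αC)/bC) := hσR
              rw [hσR0] at h7; linarith
            · have h7 : σL = (p2+p3) + 2*((αC-aC)/bC) := hσL
              rw [hσL0] at h7; linarith
          · -- σL = 0, σR ≠ 0 : impossible
            exfalso
            have hfac2 : σR * (2*(p0 + (aC+αC)/bC) - σR) = 0 := by
              linear_combination -hlinep + (2*(p3 + (αC-aC)/bC) - σL) * hσL0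
            rcases mul_eq_zero.mp hfac2 with h | h
            · exact hσR0 h
            · linarith [hXYp]
        · rcases eq_or_ne (σR^2) (σL^2) with hsq | hsq
          · -- degenerate line : a linear family of solutions
            exfalso
            have hz : 2*σL*(p3 + (αC-aC)/bC) = 2*σR*(p0 + (aC+αC)/bC) := by
              linear_combination hlinep - hsq
            have hyx2 : σR - (p0 + (aC+αC)/bC) < p0 + (aC+αC)/bC := by linarith [hXYp]
            have hwz2 : σL - (p3 + (αC-aC)/bC) < p3 + (αC-aC)/bC := by linarith [hZWp]
            have hinf := deg1 σR σL _ _ _ hσL0 hsq hz hXZp hyx2 hwz2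
            apply hfin.not_infinite
            refine (hinf.image ginj.injOn).mono ?_
            rintro _ ⟨s, hs, rfl⟩
            obtain ⟨h1, h2, h3, h4, h5, h6⟩ := hs
            refine memS s.1 s.2.1 s.2.2.1 s.2.2.2 h1 h2 h3 h4 (Or.inl ?_) (Or.inl ?_)
            · have h7 : σR = (p0+p1) + 2*((aC+αC)/bC) := hσR
              linarith
            · have h7 : σL = (p2+p3) + 2*((αC-aC)/bC) := hσL
              linarith
          · -- nondegenerate case : the solution is unique
            have hZdiff : 2*σL*((p3 + (αC-aC)/bC) - (q3 + (αC-aC)/bC))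
                = 2*σR*((p0 + (aC+αC)/bC) - (q0 + (aC+αC)/bC)) := by
              linear_combination hlinep - hlineq
            have hZsum : 2*σL*((p3 + (αC-aC)/bC) + (q3 + (αC-aC)/bC))
                = 2*σR*((p0 + (aC+αC)/bC) + (q0 + (aC+αC)/bC)) - 2*σR^2 + 2*σL^2 := by
              linear_combination hlinep + hlineq
            have hconic : (p0 + (aC+αC)/bC)^2 - (q0 + (aC+αC)/bC)^2
                = (p3 + (αC-aC)/bC)^2 - (q3 + (αC-aC)/bC)^2 := by
              linear_combination hXZp - hXZq
            have hzero : ((p0 + (aC+αC)/bC) - (q0 + (aC+αC)/bC)) *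
                ((σL^2 - σR^2) * ((p0 + (aC+αC)/bC) + (q0 + (aC+αC)/bC) - σR)) = 0 := by
              linear_combination (σL^2)*hconic
                + ((σL*((p3 + (αC-aC)/bC) + (q3 + (αC-aC)/bC)))/2)*hZdiff
                + ((σR*((p0 + (aC+αC)/bC) - (q0 + (aC+αC)/bC)))/2)*hZsum
            have h00 : p0 = q0 := by
              rcases mul_eq_zero.mp hzero with h | h
              · linarith
              · rcases mul_eq_zero.mp h with h' | h'
                · exfalso; apply hsq; linarith
                · exfalso
                  have e1 : σR < 2*(p0 + (aC+αC)/bC) := by linarith [hXYp]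
                  have e2 : σR < 2*(q0 + (aC+αC)/bC) := by linarith [hXYq]
                  linarith
            have h33 : p3 = q3 := by
              have hz2 : (2*σL)*(p3 - q3) = 0 := by
                linear_combination hZdiff + (2*σR)*h00
              rcases mul_eq_zero.mp hz2 with h | h
              · exfalso; exact hσL0 (by linarith)
              · linarith
            have h11 : p1 = q1 := by linarith [hXYp, hXYq]
            have h22 : p2 = q2 := by linarith [hZWp, hZWq]
            simp only [Prod.mk.injEq]
            exact ⟨h00, h11, h22, h33⟩
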